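/- For every θ > 0, the variance of the i-Garima distribution is ∫₀^∞ x² · (θ/(θ+3))·(2+θ+θx)·e^{-θx} dx − (∫₀^∞ x · (θ/(θ+3))·(2+θ+θx)·e^{-θx} dx)² = (θ²+8θ+14)/(θ²(θ+3)²). -/

import Mathlib

open Real MeasureTheory Set

lemma momI (θ : ℝ) (hθ : 0 < θ) (n : ℕ) :
    IntegrableOn (fun x : ℝ => x ^ n * Real.exp (-θ * x)) (Ioi 0) := by
  have := integrableOn_rpow_mul_exp_neg_mul_rpow (p := 1) (s := n) (b := θ)
    (by exact lt_of_lt_of_le neg_one_lt_zero (Nat.cast_nonneg n)) zero_lt_one hθ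
  refine this.congr_fun (fun x hx => ?_) measurableSet_Ioi
  beta_reduce
  rw [Real.rpow_natCast, Real.rpow_one]

lemma mom (θ : ℝ) (hθ : 0 < θ) (n : ℕ) :
    ∫ x in Ioi (0 : ℝ), x ^ n * Real.exp (-θ * x) = n.factorial / θ ^ (n + 1) := by
  have h := integral_rpow_mul_exp_neg_mul_Ioi (a := (n : ℝ) + 1) (r := θ)
    (by positivity) hθ
  rw [show ((n : ℝ) + 1 - 1) = (n : ℝ) by ring] at h
  have heq : ∫ x in Ioi (0 : ℝ), x ^ n * Real.exp (-θ * x)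
      = ∫ x in Ioi (0 : ℝ), x ^ (n : ℝ) * Real.exp (-(θ * x)) := by
    refine setIntegral_congr_fun measurableSet_Ioi (fun x hx => ?_)
    rw [Real.rpow_natCast, neg_mul]
  rw [heq, h, Real.Gamma_nat_eq_factorial, div_rpow zero_le_one hθ.le,
    Real.one_rpow, ← Real.rpow_natCast θ (n + 1)]
  rw [one_div, show ((n : ℝ) + 1) = ((n + 1 : ℕ) : ℝ) by push_cast; ring,
    Real.rpow_natCast]
  ring

lemma igpow (θ : ℝ) (hθ : 0 < θ) (k : ℕ) :
    ∫ x in Ioi (0 : ℝ),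
        x ^ k * ((θ / (θ + 3)) * (2 + θ + θ * x) * Real.exp (-θ * x))
      = (θ / (θ + 3)) * ((2 + θ) * (k.factorial / θ ^ (k + 1))
          + θ * ((k + 1).factorial / θ ^ (k + 2))) := by
  have heq : ∫ x in Ioi (0 : ℝ),
        x ^ k * ((θ / (θ + 3)) * (2 + θ + θ * x) * Real.exp (-θ * x))
      = ∫ x in Ioi (0 : ℝ),
        ((θ / (θ + 3)) * (2 + θ)) * (x ^ k * Real.exp (-θ * x))
          + ((θ / (θ + 3)) * θ) * (x ^ (k + 1) * Real.exp (-θ * x)) := by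
    refine setIntegral_congr_fun measurableSet_Ioi (fun x hx => ?_)
    ring
  rw [heq, integral_add (((momI θ hθ k).const_mul _)) (((momI θ hθ (k + 1)).const_mul _)),
    integral_const_mul, integral_const_mul, mom θ hθ k, mom θ hθ (k + 1)]
  ring

/-- The variance of the i-Garima distribution is (θ²+8θ+14)/(θ²(θ+3)²). -/
theorem iGarima_variance (θ : ℝ) (hθ : 0 < θ) :
    (∫ x in Set.Ioi (0 : ℝ),
        x ^ 2 * ((θ / (θ + 3)) * (2 + θ + θ * x) * Real.exp (-θ * x)))
      - (∫ x in Set.Ioi (0 : ℝ),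
          x * ((θ / (θ + 3)) * (2 + θ + θ * x) * Real.exp (-θ * x))) ^ 2
      = (θ ^ 2 + 8 * θ + 14) / (θ ^ 2 * (θ + 3) ^ 2) := by
  have h1 : ∫ x in Set.Ioi (0 : ℝ),
      x * ((θ / (θ + 3)) * (2 + θ + θ * x) * Real.exp (-θ * x))
      = (θ / (θ + 3)) * ((2 + θ) * (Nat.factorial 1 / θ ^ 2)
          + θ * (Nat.factorial 2 / θ ^ 3)) := by
    have := igpow θ hθ 1
    simpa [pow_one] using this
  rw [h1, igpow θ hθ 2]
  have h3 : θ + 3 ≠ 0 := by positivity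
  simp [Nat.factorial]
  field_simp
  ring
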